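/- Let T > 0, let α : ℝ × ℝ × ℝ → ℝ be a C² function (arguments (x,τ,φ)), and let V : ℝ × ℝ → ℝ be a C³ function such that ∂_xV(x,t) > 0 for all (x,t). Define φ(x,τ) := −∂²_xV(x,T−τ)/∂_xV(x,T−τ), and assume φ is C² in x and C¹ in τ. If V satisfies ∂_tV(x,t) − α(x, T−t, φ(x, T−t))·∂_xV(x,t) = 0 for all x ∈ ℝ and t ∈ [0,T], then φ satisfies the quasilinear parabolic equation ∂_τφ(x,τ) − ∂²_x[ α(x,τ,φ(x,τ)) ] = −∂_x[ α(x,τ,φ(x,τ))·φ(x,τ) ] for all x ∈ ℝ and τ ∈ (0,T). -/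

import Mathlib

open Set

lemma slice1 {f : ℝ × ℝ → ℝ} {x t : ℝ} (hf : DifferentiableAt ℝ f (x, t)) :
    HasDerivAt (fun z => f (z, t)) (fderiv ℝ f (x, t) (1, 0)) x := by
  have h1 : HasDerivAt (fun z : ℝ => ((z : ℝ), t)) ((1 : ℝ), (0 : ℝ)) x :=
    (hasDerivAt_id x).prodMk (hasDerivAt_const x t)
  exact hf.hasFDerivAt.comp_hasDerivAt x h1

lemma slice2 {f : ℝ × ℝ → ℝ} {x t : ℝ} (hf : DifferentiableAt ℝ f (x, t)) :
    HasDerivAt (fun s => f (x, s)) (fderiv ℝ f (x, t) (0, 1)) t := by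
  have h1 : HasDerivAt (fun s : ℝ => (x, s)) ((0 : ℝ), (1 : ℝ)) t :=
    (hasDerivAt_const t x).prodMk (hasDerivAt_id t)
  exact hf.hasFDerivAt.comp_hasDerivAt t h1

lemma slice2' {f : ℝ × ℝ → ℝ} {x T τ : ℝ} (hf : DifferentiableAt ℝ f (x, T - τ)) :
    HasDerivAt (fun s => f (x, T - s)) (-(fderiv ℝ f (x, T - τ) (0, 1))) τ := by
  have h1 : HasDerivAt (fun s : ℝ => (x, T - s)) ((0 : ℝ), (-1 : ℝ)) τ :=
    (hasDerivAt_const τ x).prodMk ((hasDerivAt_id τ).const_sub T)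
  have : HasDerivAt (fun s => f (x, T - s)) (fderiv ℝ f (x, T - τ) ((0 : ℝ), (-1 : ℝ))) τ :=
    hf.hasFDerivAt.comp_hasDerivAt τ h1
  convert this using 1
  have : ((0 : ℝ), (-1 : ℝ)) = -((0 : ℝ), (1 : ℝ)) := by norm_num [Prod.ext_iff]
  rw [this, map_neg]

lemma fderiv_dir {f : ℝ × ℝ → ℝ} {p : ℝ × ℝ} (hf : ContDiff ℝ 2 f) (v w : ℝ × ℝ) :
    fderiv ℝ (fun q => fderiv ℝ f q v) p w = fderiv ℝ (fderiv ℝ f) p w v := by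
  have hd : DifferentiableAt ℝ (fderiv ℝ f) p :=
    ((hf.fderiv_right (m := 1) (by norm_num)).differentiable (by norm_num)) p
  have : HasFDerivAt (fun q => fderiv ℝ f q v)
      ((ContinuousLinearMap.apply ℝ ℝ v).comp (fderiv ℝ (fderiv ℝ f) p)) p :=
    (ContinuousLinearMap.apply ℝ ℝ v).hasFDerivAt.comp p hd.hasFDerivAt
  rw [this.fderiv]; rfl

lemma fderiv_swap {f : ℝ × ℝ → ℝ} {p : ℝ × ℝ} (hf : ContDiff ℝ 2 f) (v w : ℝ × ℝ) :
    fderiv ℝ (fun q => fderiv ℝ f q v) p w = fderiv ℝ (fun q => fderiv ℝ f q w) p v := by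
  rw [fderiv_dir hf, fderiv_dir hf]
  exact (hf.contDiffAt.isSymmSndFDerivAt (by norm_num)) w v


/-- Riccati transformation. If `V` is `C³` with `∂ₓV > 0`, `α` is `C²`,
`φ(x,τ) := −∂²ₓV(x,T−τ)/∂ₓV(x,T−τ)` (assumed `C²` in `x` and `C¹` in `τ`), and `V` solves
`∂ₜV − α(x,T−t,φ(x,T−t))∂ₓV = 0`, then `φ` solves
`∂_τφ − ∂²ₓ[α(x,τ,φ(x,τ))] = −∂ₓ[α(x,τ,φ(x,τ))φ(x,τ)]` on `ℝ × (0,T)`. -/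
theorem stmt10 (T : ℝ) (hT : 0 < T)
    (α : ℝ → ℝ → ℝ → ℝ)
    (hα : ContDiff ℝ 2 (fun p : ℝ × ℝ × ℝ => α p.1 p.2.1 p.2.2))
    (V : ℝ → ℝ → ℝ)
    (hV : ContDiff ℝ 3 (fun p : ℝ × ℝ => V p.1 p.2))
    (hVx : ∀ x t : ℝ, 0 < deriv (fun y => V y t) x)
    (φ : ℝ → ℝ → ℝ)
    (hφ : ∀ x τ : ℝ, φ x τ =
      -(deriv (fun y => deriv (fun z => V z (T - τ)) y) x) / deriv (fun y => V y (T - τ)) x)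
    (hφx : ∀ τ : ℝ, ContDiff ℝ 2 (fun x => φ x τ))
    (hφτ : ∀ x : ℝ, ContDiff ℝ 1 (fun τ => φ x τ))
    (hPDE : ∀ x t : ℝ, t ∈ Icc (0 : ℝ) T →
      deriv (fun s => V x s) t - α x (T - t) (φ x (T - t)) * deriv (fun y => V y t) x = 0) :
    ∀ x τ : ℝ, τ ∈ Ioo (0 : ℝ) T →
      deriv (fun s => φ x s) τ - deriv (fun y => deriv (fun z => α z τ (φ z τ)) y) x =
        -deriv (fun y => α y τ (φ y τ) * φ y τ) x := by
  intro x τ hτ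
  -- notation
  set F : ℝ × ℝ → ℝ := fun p : ℝ × ℝ => V p.1 p.2 with hFdef
  set U : ℝ × ℝ → ℝ := fun p => fderiv ℝ F p (1, 0) with hUdef
  set P : ℝ × ℝ → ℝ := fun p => fderiv ℝ F p (0, 1) with hPdef
  set W : ℝ × ℝ → ℝ := fun p => fderiv ℝ U p (1, 0) with hWdef
  set Px : ℝ × ℝ → ℝ := fun p => fderiv ℝ P p (1, 0) with hPxdef
  have hF3 : ContDiff ℝ 3 F := hV
  have hU2 : ContDiff ℝ 2 U := (hF3.fderiv_right (by norm_num)).clm_apply contDiff_const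
  have hP2 : ContDiff ℝ 2 P := (hF3.fderiv_right (by norm_num)).clm_apply contDiff_const
  have hW1 : ContDiff ℝ 1 W := (hU2.fderiv_right (by norm_num)).clm_apply contDiff_const
  have hPx1 : ContDiff ℝ 1 Px := (hP2.fderiv_right (by norm_num)).clm_apply contDiff_const
  have hFd : Differentiable ℝ F := hF3.differentiable (by norm_num)
  have hUd : Differentiable ℝ U := hU2.differentiable (by norm_num)
  have hPd : Differentiable ℝ P := hP2.differentiable (by norm_num)
  have hWd : Differentiable ℝ W := hW1.differentiable (by norm_num)
  have hPxd : Differentiable ℝ Px := hPx1.differentiable (by norm_num)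
  -- slice identifications
  have eU : ∀ y s : ℝ, deriv (fun z => V z s) y = U (y, s) := by
    intro y s
    exact (slice1 (hFd (y, s))).deriv
  have eP : ∀ y s : ℝ, deriv (fun s' => V y s') s = P (y, s) := by
    intro y s
    exact (slice2 (hFd (y, s))).deriv
  have eW : ∀ y s : ℝ, deriv (fun z => deriv (fun z' => V z' s) z) y = W (y, s) := by
    intro y s
    have : (fun z => deriv (fun z' => V z' s) z) = fun z => U (z, s) := by
      funext z; exact eU z s
    rw [this]
    exact (slice1 (hUd (y, s))).deriv
  have hUpos : ∀ p : ℝ × ℝ, 0 < U p := by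
    intro p
    have := hVx p.1 p.2
    rwa [eU] at this
  -- φ in terms of U, W
  have hφ' : ∀ y s : ℝ, φ y s = -W (y, T - s) / U (y, T - s) := by
    intro y s
    rw [hφ y s, eW, eU]
  -- time point
  have ht : T - τ ∈ Icc (0:ℝ) T := ⟨by linarith [hτ.2], by linarith [hτ.1]⟩
  -- the drift coefficient
  have hg : ContDiff ℝ 2 (fun y => α y τ (φ y τ)) := by
    exact hα.comp ((contDiff_id (E := ℝ)).prodMk (contDiff_const.prodMk (hφx τ)))
  have hgd : Differentiable ℝ (fun y => α y τ (φ y τ)) := hg.differentiable (by norm_num)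
  have hg' : ContDiff ℝ 1 (deriv (fun y => α y τ (φ y τ))) := by
    have h2 : (2 : WithTop ℕ∞) = 1 + 1 := by norm_num
    rw [h2] at hg
    exact (contDiff_succ_iff_deriv.1 hg).2.2
  have hg'd : Differentiable ℝ (deriv (fun y => α y τ (φ y τ))) := hg'.differentiable (by norm_num)
  -- PDE in terms of P, U
  have h1 : ∀ y : ℝ, P (y, T - τ) = (fun y => α y τ (φ y τ)) y * U (y, T - τ) := by
    intro y
    have := hPDE y (T - τ) ht
    rw [eP, eU, show T - (T - τ) = τ by ring] at this
    simpa using by linarith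
  -- first x-derivative of the PDE
  have h2 : ∀ y : ℝ, Px (y, T - τ) =
      deriv (fun y => α y τ (φ y τ)) y * U (y, T - τ)
        + (fun y => α y τ (φ y τ)) y * W (y, T - τ) := by
    intro y
    have hl : HasDerivAt (fun z => P (z, T - τ)) (Px (y, T - τ)) y := slice1 (hPd _)
    have hr : HasDerivAt (fun z => (fun y => α y τ (φ y τ)) z * U (z, T - τ))
        (deriv (fun y => α y τ (φ y τ)) y * U (y, T - τ)
          + (fun y => α y τ (φ y τ)) y * W (y, T - τ)) y :=
      ((hgd y).hasDerivAt).mul (slice1 (hUd _))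
    have he : (fun z => P (z, T - τ)) = fun z => (fun y => α y τ (φ y τ)) z * U (z, T - τ) := by
      funext z; exact h1 z
    rw [he] at hl
    exact hl.unique hr
  -- second x-derivative of the PDE
  have h3 : fderiv ℝ Px (x, T - τ) (1, 0) =
      deriv (deriv (fun y => α y τ (φ y τ))) x * U (x, T - τ)
        + deriv (fun y => α y τ (φ y τ)) x * W (x, T - τ)
        + (deriv (fun y => α y τ (φ y τ)) x * W (x, T - τ)
          + (fun y => α y τ (φ y τ)) x * fderiv ℝ W (x, T - τ) (1, 0)) := by
    have hl : HasDerivAt (fun z => Px (z, T - τ)) (fderiv ℝ Px (x, T - τ) (1, 0)) x :=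
      slice1 (hPxd _)
    have hr : HasDerivAt (fun z => deriv (fun y => α y τ (φ y τ)) z * U (z, T - τ)
          + (fun y => α y τ (φ y τ)) z * W (z, T - τ))
        (deriv (deriv (fun y => α y τ (φ y τ))) x * U (x, T - τ)
          + deriv (fun y => α y τ (φ y τ)) x * W (x, T - τ)
          + (deriv (fun y => α y τ (φ y τ)) x * W (x, T - τ)
            + (fun y => α y τ (φ y τ)) x * fderiv ℝ W (x, T - τ) (1, 0))) x :=
      (((hg'd x).hasDerivAt).mul (slice1 (hUd _))).add
        (((hgd x).hasDerivAt).mul (slice1 (hWd _)))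
    have he : (fun z => Px (z, T - τ)) = fun z => deriv (fun y => α y τ (φ y τ)) z * U (z, T - τ)
        + (fun y => α y τ (φ y τ)) z * W (z, T - τ) := by
      funext z; exact h2 z
    rw [he] at hl
    exact hl.unique hr
  -- Clairaut: ∂ₜU = Px and ∂ₜW = ∂ₓPx
  have cU : ∀ p : ℝ × ℝ, fderiv ℝ U p (0, 1) = Px p := by
    intro p
    rw [hUdef, hPxdef, hPdef]
    exact fderiv_swap (hF3.of_le (by norm_num)) _ _
  have cW : fderiv ℝ W (x, T - τ) (0, 1) = fderiv ℝ Px (x, T - τ) (1, 0) := by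
    have step1 : fderiv ℝ W (x, T - τ) (0, 1)
        = fderiv ℝ (fun q => fderiv ℝ U q (0, 1)) (x, T - τ) (1, 0) := by
      rw [hWdef]
      exact fderiv_swap hU2 _ _
    have step2 : (fun q => fderiv ℝ U q (0, 1)) = Px := by
      funext q; exact cU q
    rw [step1, step2]
  -- τ-derivative of φ
  have hnum : HasDerivAt (fun s => -W (x, T - s)) (fderiv ℝ W (x, T - τ) (0, 1)) τ := by
    have := (slice2' (hWd (x, T - τ))).neg
    simp only [neg_neg] at this
    exact this
  have hden : HasDerivAt (fun s => U (x, T - s)) (-(fderiv ℝ U (x, T - τ) (0, 1))) τ :=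
    slice2' (hUd (x, T - τ))
  have hdiv := hnum.div hden (ne_of_gt (hUpos (x, T - τ)))
  have E1 : deriv (fun s => φ x s) τ =
      (fderiv ℝ W (x, T - τ) (0, 1) * U (x, T - τ)
        - -W (x, T - τ) * -(fderiv ℝ U (x, T - τ) (0, 1))) / U (x, T - τ) ^ 2 := by
    have he : (fun s => φ x s) = fun s => -W (x, T - s) / U (x, T - s) := by
      funext s; exact hφ' x s
    rw [he]
    exact hdiv.deriv
  -- x-derivative of φ
  have hWU : fderiv ℝ U (x, T - τ) (1, 0) = W (x, T - τ) := by rw [hWdef]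
  have Eφx : deriv (fun y => φ y τ) x =
      (-(fderiv ℝ W (x, T - τ) (1, 0)) * U (x, T - τ)
        - -W (x, T - τ) * W (x, T - τ)) / U (x, T - τ) ^ 2 := by
    have he : (fun y => φ y τ) = fun y => -W (y, T - τ) / U (y, T - τ) := by
      funext y; exact hφ' y τ
    rw [he]
    have hn : HasDerivAt (fun y => -W (y, T - τ)) (-(fderiv ℝ W (x, T - τ) (1, 0))) x :=
      (slice1 (hWd (x, T - τ))).neg
    have hd2 : HasDerivAt (fun y => U (y, T - τ)) (W (x, T - τ)) x := by
      have := slice1 (hUd (x, T - τ))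
      rwa [hWU] at this
    exact (hn.div hd2 (ne_of_gt (hUpos (x, T - τ)))).deriv
  -- the product term
  have E3 : deriv (fun y => α y τ (φ y τ) * φ y τ) x =
      deriv (fun y => α y τ (φ y τ)) x * φ x τ
        + (fun y => α y τ (φ y τ)) x * deriv (fun y => φ y τ) x := by
    exact (((hgd x).hasDerivAt).mul
      (((hφx τ).differentiable (by norm_num) x).hasDerivAt)).deriv
  -- assemble
  have hut : fderiv ℝ U (x, T - τ) (0, 1) =
      deriv (fun y => α y τ (φ y τ)) x * U (x, T - τ)
        + (fun y => α y τ (φ y τ)) x * W (x, T - τ) := by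
    rw [cU]; exact h2 x
  have hwt := cW.trans h3
  have E2 : deriv (fun y => deriv (fun z => α z τ (φ z τ)) y) x
      = deriv (deriv (fun y => α y τ (φ y τ))) x := rfl
  rw [E1, E2, E3, hwt, hut, Eφx, hφ' x τ]
  have hu : U (x, T - τ) ≠ 0 := ne_of_gt (hUpos (x, T - τ))
  field_simp
  ring
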